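/- arXiv:2209.00975 — 2 statements merged into one kernel-verified Lean document; each statement's English description precedes it below -/
import Mathlib

section
/- Let ⊑_A, ⊑_{A'}, ⊑_B, ⊑_{B'} be partial preorders on types A, A', B, B'. Let (upA, downA) be an embedding–projection pair from (A, ⊑_A) to (A', ⊑_{A'}) and (upB, downB) an embedding–projection pair from (B, ⊑_B) to (B', ⊑_{B'}). Define F : (A → B) → (A' → B') by F f := upB ∘ f ∘ downA and G : (A' → B') → (A → B) by G g := downB ∘ g ∘ upA. Then (F, G) is an embedding–projection pair from (A → B, ⊑_{A→B}) to (A' → B', ⊑_{A'→B'}), where the function spaces carry the function-space relations induced by the given partial preorders. -/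
/-- A relation is quasi-reflexive if any two related elements are each self-related. -/
def QuasiRefl {X : Type*} (r : X → X → Prop) : Prop :=
  ∀ x y, r x y → r x x ∧ r y y

/-- A partial preorder is a transitive and quasi-reflexive relation. -/
def IsPartialPreorder {X : Type*} (r : X → X → Prop) : Prop :=
  Transitive r ∧ QuasiRefl r

/-- An element is self-precise if it is related to itself. -/
def SelfPrecise {X : Type*} (r : X → X → Prop) (x : X) : Prop := r x x

/-- Two elements are equiprecise if they are related both ways. -/
def Equiprecise {X : Type*} (r : X → X → Prop) (x y : X) : Prop := r x y ∧ r y x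

/-- Embedding-projection pair between two relations. -/
structure IsEPPair {A B : Type*} (rA : A → A → Prop) (rB : B → B → Prop)
    (up : A → B) (down : B → A) : Prop where
  up_mono : ∀ a a', rA a a' → rB (up a) (up a')
  down_mono : ∀ b b', rB b b' → rA (down b) (down b')
  adjunction : ∀ a b, SelfPrecise rA a → SelfPrecise rB b →
    (rB (up a) b ↔ rA a (down b))
  retraction : ∀ a, SelfPrecise rA a → rA (down (up a)) a

/-- Function-space relation induced by relations on domain and codomain. -/
def FunRel {A B : Type*} (rA : A → A → Prop) (rB : B → B → Prop)
    (f g : A → B) : Prop :=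
  (∀ a₀ a₁, rA a₀ a₁ → rB (f a₀) (f a₁)) ∧
  (∀ a₀ a₁, rA a₀ a₁ → rB (g a₀) (g a₁)) ∧
  (∀ a₀ a₁, rA a₀ a₁ → rB (f a₀) (g a₁))

/-- ep-pairs lift to function spaces. -/
theorem stmt7 {A A' B B' : Type*}
    (rA : A → A → Prop) (rA' : A' → A' → Prop)
    (rB : B → B → Prop) (rB' : B' → B' → Prop)
    (hA : IsPartialPreorder rA) (hA' : IsPartialPreorder rA')
    (hB : IsPartialPreorder rB) (hB' : IsPartialPreorder rB')
    (upA : A → A') (downA : A' → A) (upB : B → B') (downB : B' → B)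
    (hepA : IsEPPair rA rA' upA downA) (hepB : IsEPPair rB rB' upB downB) :
    IsEPPair (FunRel rA rB) (FunRel rA' rB')
      (fun f => upB ∘ f ∘ downA) (fun g => downB ∘ g ∘ upA) := by
  obtain ⟨tA, qA⟩ := hA
  obtain ⟨tA', qA'⟩ := hA'
  obtain ⟨tB, qB⟩ := hB
  obtain ⟨tB', qB'⟩ := hB'
  -- helper: up∘down deflationary on self-precise elements
  have updownA : ∀ b', rA' b' b' → rA' (upA (downA b')) b' := by
    intro b' hb'
    have hd : rA (downA b') (downA b') := hepA.down_mono _ _ hb'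
    exact (hepA.adjunction _ _ hd hb').mpr hd
  have updownB : ∀ b', rB' b' b' → rB' (upB (downB b')) b' := by
    intro b' hb'
    have hd : rB (downB b') (downB b') := hepB.down_mono _ _ hb'
    exact (hepB.adjunction _ _ hd hb').mpr hd
  -- helper: a₀ ⊑ a₁ → a₀ ⊑ downA (upA a₁)
  have keyA : ∀ a₀ a₁, rA a₀ a₁ → rA a₀ (downA (upA a₁)) := by
    intro a₀ a₁ h
    have h0 := (qA _ _ h).1
    have h1 := (qA _ _ h).2
    exact (hepA.adjunction _ _ h0 (hepA.up_mono _ _ h1)).mp (hepA.up_mono _ _ h)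
  constructor
  · -- up_mono
    rintro f f' ⟨h1, h2, h3⟩
    refine ⟨?_, ?_, ?_⟩ <;> intro a₀ a₁ h <;>
      exact hepB.up_mono _ _ (by first
        | exact h1 _ _ (hepA.down_mono _ _ h)
        | exact h2 _ _ (hepA.down_mono _ _ h)
        | exact h3 _ _ (hepA.down_mono _ _ h))
  · -- down_mono
    rintro g g' ⟨h1, h2, h3⟩
    refine ⟨?_, ?_, ?_⟩ <;> intro a₀ a₁ h <;>
      exact hepB.down_mono _ _ (by first
        | exact h1 _ _ (hepA.up_mono _ _ h)
        | exact h2 _ _ (hepA.up_mono _ _ h)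
        | exact h3 _ _ (hepA.up_mono _ _ h))
  · -- adjunction
    rintro f g ⟨hf, -, -⟩ ⟨hg, -, -⟩
    constructor
    · rintro ⟨-, -, h3⟩
      refine ⟨hf, fun a₀ a₁ h => hepB.down_mono _ _ (hg _ _ (hepA.up_mono _ _ h)), ?_⟩
      intro a₀ a₁ h
      have h1 := (qA _ _ h).2
      have step1 : rB (f a₀) (f (downA (upA a₁))) := hf _ _ (keyA _ _ h)
      have step2 : rB' (upB (f (downA (upA a₁)))) (g (upA a₁)) :=
        h3 _ _ (hepA.up_mono _ _ h1)
      have hsp : rB (f (downA (upA a₁))) (f (downA (upA a₁))) :=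
        hf _ _ (hepA.down_mono _ _ (hepA.up_mono _ _ h1))
      have hsg : rB' (g (upA a₁)) (g (upA a₁)) := hg _ _ (hepA.up_mono _ _ h1)
      exact tB step1 ((hepB.adjunction _ _ hsp hsg).mp step2)
    · rintro ⟨-, -, h3⟩
      refine ⟨fun a₀ a₁ h => hepB.up_mono _ _ (hf _ _ (hepA.down_mono _ _ h)), hg, ?_⟩
      intro a₀ a₁ h
      have h1 := (qA' _ _ h).2
      have hd : rA (downA a₀) (downA a₁) := hepA.down_mono _ _ h
      have step1 : rB (f (downA a₀)) (downB (g (upA (downA a₁)))) := h3 _ _ hd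
      have hsf : rB (f (downA a₀)) (f (downA a₀)) := hf _ _ (qA _ _ hd).1
      have hsg : rB' (g (upA (downA a₁))) (g (upA (downA a₁))) :=
        hg _ _ (hepA.up_mono _ _ (qA _ _ hd).2)
      have step2 : rB' (upB (f (downA a₀))) (g (upA (downA a₁))) :=
        (hepB.adjunction _ _ hsf hsg).mpr step1
      exact tB' step2 (hg _ _ (updownA _ h1))
  · -- retraction
    rintro f ⟨hf, -, -⟩
    refine ⟨?_, hf, ?_⟩
    · intro a₀ a₁ h
      exact hepB.down_mono _ _ (hepB.up_mono _ _ (hf _ _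
        (hepA.down_mono _ _ (hepA.up_mono _ _ h))))
    · intro a₀ a₁ h
      have h0 := (qA _ _ h).1
      have hret : rA (downA (upA a₀)) a₁ := tA (hepA.retraction _ h0) h
      have hsp : rB (f (downA (upA a₀))) (f (downA (upA a₀))) :=
        hf _ _ (hepA.down_mono _ _ (hepA.up_mono _ _ h0))
      exact tB (hepB.retraction _ hsp) (hf _ _ hret)
end

section
/- Let ⊑_A and ⊑_B be partial preorders on types A and B, and let (up, down) be an embedding–projection pair from (A, ⊑_A) to (B, ⊑_B). Then (List.map up, List.map down) is an embedding–projection pair from (List A, List.Forall₂ ⊑_A) to (List B, List.Forall₂ ⊑_B). -/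
/-- ep-pairs lift to lists via `List.map`. -/
theorem stmt10 {A B : Type*} (rA : A → A → Prop) (rB : B → B → Prop)
    (hA : IsPartialPreorder rA) (hB : IsPartialPreorder rB)
    (up : A → B) (down : B → A) (hep : IsEPPair rA rB up down) :
    IsEPPair (List.Forall₂ rA) (List.Forall₂ rB)
      (List.map up) (List.map down) := by
  constructor
  · intro a a' h
    induction h with
    | nil => simp
    | cons hx _ ih => simpa using List.Forall₂.cons (hep.up_mono _ _ hx) ih
  · intro b b' h
    induction h with
    | nil => simp
    | cons hx _ ih => simpa using List.Forall₂.cons (hep.down_mono _ _ hx) ih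
  · intro a b ha hb
    induction a generalizing b with
    | nil =>
      cases b with
      | nil => simp
      | cons y ys => simp [List.forall₂_nil_left_iff, List.forall₂_cons]
    | cons x xs ih =>
      cases b with
      | nil => simp [List.forall₂_nil_right_iff]
      | cons y ys =>
        simp only [SelfPrecise, List.forall₂_cons] at ha hb
        simp only [List.map_cons, List.forall₂_cons]
        rw [hep.adjunction _ _ ha.1 hb.1, ih ys ha.2 hb.2]
  · intro a ha
    induction a with
    | nil => simp
    | cons x xs ih =>
      simp only [SelfPrecise, List.forall₂_cons] at ha
      simpa using List.Forall₂.cons (hep.retraction _ ha.1) (ih ha.2)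
end
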